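/- arXiv:1808.10156 — 3 statements merged into one kernel-verified Lean document; each statement's English description precedes it below -/
import Mathlib

section
/- Let $X$ be a compact metric space, $T:X\to X$ a homeomorphism, and $\mu$ a Borel probability measure on $X$ (not necessarily invariant). Let $\alpha$ be a finite Borel partition of $X$ and let $\beta_1 \prec \beta_2 \prec \cdots$ be an increasing sequence of finite Borel partitions. If there is a constant $c$ such that $\lim_{n\to\infty} \frac{-\log\mu((\alpha\vee\beta_n)(x))}{n} = c$ for $\mu$-a.e. $x$, then $\lim_{n\to\infty} \frac{-\log\mu(\beta_n(x))}{n} = c$ for $\mu$-a.e. $x$. -/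
open MeasureTheory Filter Set Topology

open ENNReal

lemma atom_pos {X ι : Type*} [MeasurableSpace X] [Countable ι] (μ : Measure X) (f : X → ι) :
    ∀ᵐ x ∂μ, μ (f ⁻¹' {f x}) ≠ 0 := by
  rw [ae_iff]
  have hsub : {x | ¬ μ (f ⁻¹' {f x}) ≠ 0} ⊆ ⋃ a ∈ {a : ι | μ (f ⁻¹' {a}) = 0}, f ⁻¹' {a} := by
    intro x hx
    simp only [Set.mem_setOf_eq, not_not] at hx
    exact Set.mem_biUnion hx rfl
  refine measure_mono_null hsub ?_
  exact (measure_biUnion_null_iff (Set.to_countable _)).2 fun a ha => ha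

lemma fiber_sum {X : Type*} [MeasurableSpace X] (μ : Measure X) [IsProbabilityMeasure μ]
    (b : X → ℕ) (hb : Measurable b) : ∑' a : ℕ, μ (b ⁻¹' {a}) ≤ 1 := by
  have hd : Pairwise (Function.onFun Disjoint fun a : ℕ => b ⁻¹' {a}) := fun i j hij =>
    Disjoint.preimage b (by simpa using hij)
  have hm : ∀ a : ℕ, MeasurableSet (b ⁻¹' {a}) := fun a => hb (measurableSet_singleton a)
  rw [← measure_iUnion hd hm]
  exact prob_le_one

lemma bad_bound {X : Type*} [MeasurableSpace X] (μ : Measure X) [IsProbabilityMeasure μ]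
    (α : X → ℕ) (hαfin : (Set.range α).Finite)
    (b : X → ℕ) (hb : Measurable b) (E : ℝ≥0∞) (hE0 : E ≠ 0) (hEtop : E ≠ ∞) :
    μ {x | E * μ (α ⁻¹' {α x} ∩ b ⁻¹' {b x}) ≤ μ (b ⁻¹' {b x})}
      ≤ (hαfin.toFinset.card : ℝ≥0∞) * E⁻¹ := by
  set g : ℕ → Set X := fun a =>
    ⋃ c ∈ {c : ℕ | E * μ (α ⁻¹' {a} ∩ b ⁻¹' {c}) ≤ μ (b ⁻¹' {c})}, α ⁻¹' {a} ∩ b ⁻¹' {c} with hg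
  have hsub : {x | E * μ (α ⁻¹' {α x} ∩ b ⁻¹' {b x}) ≤ μ (b ⁻¹' {b x})}
      ⊆ ⋃ a ∈ hαfin.toFinset, g a := by
    intro x hx
    refine Set.mem_biUnion (hαfin.mem_toFinset.2 (Set.mem_range_self x)) ?_
    exact Set.mem_biUnion hx ⟨rfl, rfl⟩
  refine (measure_mono hsub).trans ?_
  refine (measure_biUnion_finset_le _ _).trans ?_
  rw [Finset.card_eq_sum_ones, Nat.cast_sum, Finset.sum_mul]
  refine Finset.sum_le_sum fun a _ => ?_
  rw [Nat.cast_one, one_mul]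
  have h1 : μ (g a) ≤ ∑' c : {c : ℕ | E * μ (α ⁻¹' {a} ∩ b ⁻¹' {c}) ≤ μ (b ⁻¹' {c})},
      μ (α ⁻¹' {a} ∩ b ⁻¹' {(c : ℕ)}) := measure_biUnion_le μ (Set.to_countable _) _
  refine h1.trans ?_
  have h2 : ∀ c : {c : ℕ | E * μ (α ⁻¹' {a} ∩ b ⁻¹' {c}) ≤ μ (b ⁻¹' {c})},
      μ (α ⁻¹' {a} ∩ b ⁻¹' {(c : ℕ)}) ≤ E⁻¹ * μ (b ⁻¹' {(c : ℕ)}) := by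
    rintro ⟨c, hc⟩
    rw [Set.mem_setOf_eq] at hc
    have h3 : E⁻¹ * (E * μ (α ⁻¹' {a} ∩ b ⁻¹' {c})) ≤ E⁻¹ * μ (b ⁻¹' {c}) :=
      mul_le_mul_right hc E⁻¹
    rwa [← mul_assoc, ENNReal.inv_mul_cancel hE0 hEtop, one_mul] at h3
  refine (ENNReal.tsum_le_tsum h2).trans ?_
  rw [ENNReal.tsum_mul_left]
  have hs : ∑' c : {c : ℕ | E * μ (α ⁻¹' {a} ∩ b ⁻¹' {c}) ≤ μ (b ⁻¹' {c})},
      μ (b ⁻¹' {(c : ℕ)}) ≤ 1 :=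
    (tsum_comp_le_tsum_of_injective Subtype.val_injective _).trans (fiber_sum μ b hb)
  exact (mul_le_mul_right hs E⁻¹).trans_eq (mul_one _)

/-- if the exponential decay rate of the atoms of `α ∨ βₙ` is `c` a.e.,
then the exponential decay rate of the atoms of `βₙ` is also `c` a.e.
Finite Borel partitions are encoded as Borel measurable maps to `ℕ` with finite range;
the atom of `γ` containing `x` is `γ ⁻¹' {γ x}`, and the atom of `α ∨ βₙ` containing
`x` is `α ⁻¹' {α x} ∩ βₙ ⁻¹' {βₙ x}`. -/
theorem stmt1 {X : Type*} [MetricSpace X] [CompactSpace X] [MeasurableSpace X] [BorelSpace X]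
    (T : X ≃ₜ X) (μ : Measure X) [IsProbabilityMeasure μ]
    (α : X → ℕ) (hα : Measurable α) (hαfin : (Set.range α).Finite)
    (β : ℕ → X → ℕ) (hβ : ∀ n, Measurable (β n)) (hβfin : ∀ n, (Set.range (β n)).Finite)
    (hmono : ∀ n x y, β (n + 1) x = β (n + 1) y → β n x = β n y)
    (c : ℝ)
    (hlim : ∀ᵐ x ∂μ, Tendsto
      (fun n : ℕ => -Real.log ((μ (α ⁻¹' {α x} ∩ (β n) ⁻¹' {β n x})).toReal) / (n : ℝ))
      atTop (𝓝 c)) :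
    ∀ᵐ x ∂μ, Tendsto
      (fun n : ℕ => -Real.log ((μ ((β n) ⁻¹' {β n x})).toReal) / (n : ℝ)) atTop (𝓝 c) := by
  -- a.e. positivity of the joint atoms
  have hposJ : ∀ᵐ x ∂μ, ∀ n, μ (α ⁻¹' {α x} ∩ (β n) ⁻¹' {β n x}) ≠ 0 := by
    rw [ae_all_iff]
    intro n
    filter_upwards [atom_pos μ (fun y => (α y, β n y))] with x hx
    have hEq : (fun y => (α y, β n y)) ⁻¹' {(α x, β n x)}
        = α ⁻¹' {α x} ∩ (β n) ⁻¹' {β n x} := by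
      ext y; simp [Prod.ext_iff]
    rwa [hEq] at hx
  -- key Borel–Cantelli estimate
  have key : ∀ ε : ℝ, 0 < ε → ∀ᵐ x ∂μ, ∀ᶠ n in atTop,
      μ ((β n) ⁻¹' {β n x}) < ENNReal.ofReal (Real.exp (ε * n)) *
        μ (α ⁻¹' {α x} ∩ (β n) ⁻¹' {β n x}) := by
    intro ε hε
    set s : ℕ → Set X := fun n => {x | ENNReal.ofReal (Real.exp (ε * n)) *
      μ (α ⁻¹' {α x} ∩ (β n) ⁻¹' {β n x}) ≤ μ ((β n) ⁻¹' {β n x})} with hs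
    have hsum : (∑' n, μ (s n)) ≠ ∞ := by
      set r := ENNReal.ofReal (Real.exp (-ε)) with hrdef
      have hr1 : r < 1 := by
        rw [hrdef]
        refine ENNReal.ofReal_lt_one.2 ?_
        exact Real.exp_lt_one_iff.2 (neg_lt_zero.2 hε)
      have hb : ∀ n, μ (s n) ≤ (hαfin.toFinset.card : ℝ≥0∞) * r ^ n := by
        intro n
        have h0 : (0:ℝ) < Real.exp (ε * n) := Real.exp_pos _
        have hbb := bad_bound μ α hαfin (β n) (hβ n) (ENNReal.ofReal (Real.exp (ε * n)))
          (ENNReal.ofReal_pos.2 h0).ne' ENNReal.ofReal_ne_top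
        have hinv : (ENNReal.ofReal (Real.exp (ε * n)))⁻¹ = r ^ n := by
          rw [← ENNReal.ofReal_inv_of_pos h0, ← Real.exp_neg]
          have hmn : -(ε * n) = (n : ℕ) * (-ε) := by push_cast; ring
          rw [hmn, Real.exp_nat_mul, hrdef, ENNReal.ofReal_pow (Real.exp_pos _).le]
        rw [hinv] at hbb
        exact hbb
      have hle : (∑' n, μ (s n)) ≤ (hαfin.toFinset.card : ℝ≥0∞) * (1 - r)⁻¹ := by
        refine (ENNReal.tsum_le_tsum hb).trans_eq ?_
        rw [ENNReal.tsum_mul_left, ENNReal.tsum_geometric]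
      refine ne_top_of_le_ne_top ?_ hle
      exact ENNReal.mul_ne_top (ENNReal.natCast_ne_top _)
        (ENNReal.inv_ne_top.2 (tsub_pos_of_lt hr1).ne')
    filter_upwards [ae_eventually_notMem hsum] with x hx
    filter_upwards [hx] with n hn
    exact not_le.1 hn
  have hkey : ∀ᵐ x ∂μ, ∀ k : ℕ, ∀ᶠ n in atTop,
      μ ((β n) ⁻¹' {β n x}) < ENNReal.ofReal (Real.exp ((1/((k:ℝ)+1)) * n)) *
        μ (α ⁻¹' {α x} ∩ (β n) ⁻¹' {β n x}) :=
    ae_all_iff.2 fun k => key (1/((k:ℝ)+1)) (by positivity)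
  filter_upwards [hlim, hposJ, hkey] with x hx hpos hk
  have hu : ∀ n, 0 < (μ (α ⁻¹' {α x} ∩ (β n) ⁻¹' {β n x})).toReal :=
    fun n => ENNReal.toReal_pos (hpos n) (measure_ne_top μ _)
  have huv : ∀ n, (μ (α ⁻¹' {α x} ∩ (β n) ⁻¹' {β n x})).toReal
      ≤ (μ ((β n) ⁻¹' {β n x})).toReal :=
    fun n => ENNReal.toReal_mono (measure_ne_top μ _) (measure_mono Set.inter_subset_right)
  have hv : ∀ n, 0 < (μ ((β n) ⁻¹' {β n x})).toReal := fun n => lt_of_lt_of_le (hu n) (huv n)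
  rw [Metric.tendsto_atTop] at hx ⊢
  intro δ hδ
  obtain ⟨k, hk1⟩ := exists_nat_one_div_lt (show (0:ℝ) < δ/2 by linarith)
  obtain ⟨N1, hN1⟩ := hx (δ/2) (by linarith)
  obtain ⟨N2, hN2⟩ := Filter.eventually_atTop.1 (hk k)
  refine ⟨max (max N1 N2) 1, fun n hn => ?_⟩
  have hn1 : 1 ≤ n := le_trans (le_max_right _ _) hn
  have hnN1 : N1 ≤ n := le_trans (le_trans (le_max_left _ _) (le_max_left _ _)) hn
  have hnN2 : N2 ≤ n := le_trans (le_trans (le_max_right _ _) (le_max_left _ _)) hn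
  have hnpos : (0:ℝ) < n := by exact_mod_cast hn1
  -- upper bound
  have hlog1 : Real.log ((μ (α ⁻¹' {α x} ∩ (β n) ⁻¹' {β n x})).toReal)
      ≤ Real.log ((μ ((β n) ⁻¹' {β n x})).toReal) := Real.log_le_log (hu n) (huv n)
  have hup : -Real.log ((μ ((β n) ⁻¹' {β n x})).toReal) / n
      ≤ -Real.log ((μ (α ⁻¹' {α x} ∩ (β n) ⁻¹' {β n x})).toReal) / n := by
    exact div_le_div_of_nonneg_right (neg_le_neg hlog1) hnpos.le
  -- lower bound
  have hdn := hN2 n hnN2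
  have hne : ENNReal.ofReal (Real.exp ((1/((k:ℝ)+1)) * n)) *
      μ (α ⁻¹' {α x} ∩ (β n) ⁻¹' {β n x}) ≠ ∞ :=
    ENNReal.mul_ne_top ENNReal.ofReal_ne_top (measure_ne_top μ _)
  have h5 : (μ ((β n) ⁻¹' {β n x})).toReal
      < Real.exp ((1/((k:ℝ)+1)) * n) * (μ (α ⁻¹' {α x} ∩ (β n) ⁻¹' {β n x})).toReal := by
    have := (ENNReal.toReal_lt_toReal (measure_ne_top μ _) hne).2 hdn
    rwa [ENNReal.toReal_mul, ENNReal.toReal_ofReal (Real.exp_pos _).le] at this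
  have hlog2 : Real.log ((μ ((β n) ⁻¹' {β n x})).toReal)
      < (1/((k:ℝ)+1)) * n + Real.log ((μ (α ⁻¹' {α x} ∩ (β n) ⁻¹' {β n x})).toReal) := by
    have := Real.log_lt_log (hv n) h5
    rwa [Real.log_mul (Real.exp_ne_zero _) (hu n).ne', Real.log_exp] at this
  have h6 : -Real.log ((μ (α ⁻¹' {α x} ∩ (β n) ⁻¹' {β n x})).toReal) / n - 1/((k:ℝ)+1)
      < -Real.log ((μ ((β n) ⁻¹' {β n x})).toReal) / n := by
    have h7 : (-Real.log ((μ (α ⁻¹' {α x} ∩ (β n) ⁻¹' {β n x})).toReal)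
        - (1/((k:ℝ)+1)) * n) / n
        < -Real.log ((μ ((β n) ⁻¹' {β n x})).toReal) / n := by
      exact (div_lt_div_iff_of_pos_right hnpos).2 (by linarith)
    have h8 : (-Real.log ((μ (α ⁻¹' {α x} ∩ (β n) ⁻¹' {β n x})).toReal)
        - (1/((k:ℝ)+1)) * n) / n
        = -Real.log ((μ (α ⁻¹' {α x} ∩ (β n) ⁻¹' {β n x})).toReal) / n - 1/((k:ℝ)+1) := by
      rw [sub_div, mul_div_assoc, div_self hnpos.ne', mul_one]
    rwa [h8] at h7
  have hU := hN1 n hnN1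
  rw [Real.dist_eq, abs_lt] at hU ⊢
  constructor <;> [linarith [hk1]; linarith [hk1]]
end

section
/- Let $\mathbf{a} = (a_k)_{k\ge 0}$ be a sequence of positive reals that sub-exponentially decreases to $0$: $a_k$ is strictly decreasing to $0$, and there exist $C>0$ and positive reals $(b_k)_{k\ge 0}$ with $\lim_{k\to\infty}\frac{1}{k}|\log b_k| = 0$ such that $a_k/a_l \le C\, b_{|k-l|}$ for all $k,l\ge 0$. Let $\mathbb{H}_{\mathbf{a}} = \{(x_n)_{n\in\mathbb{Z}} : \sum_{n\in\mathbb{Z}} a_{|n|}|x_n|^2 < \infty\}$ with norm $\|x\|_{\mathbf{a}}^2 = \sum_n a_{|n|}|x_n|^2$, and let $T$ be the left-shift $(Tx)_n = x_{n+1}$. Then $T$ is a bounded linear operator on $\mathbb{H}_{\mathbf{a}}$, $\|T^k\| > 1$ for each $k\ge 1$, and the spectral radius of $T$ equals $1$. -/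
open MeasureTheory Filter Set Topology
open scoped ENNReal

/-- The weighted counting measure on `ℤ` with weights `a_{|n|}`; `L²` of this measure
is the weighted sequence space `ℍ_𝐚 = {x : ∑ₙ a_{|n|} |xₙ|² < ∞}`. -/
noncomputable def muA (a : ℕ → ℝ) : Measure ℤ :=
  Measure.sum fun n : ℤ => ENNReal.ofReal (a n.natAbs) • Measure.dirac n

lemma lintegral_muA (a : ℕ → ℝ) (g : ℤ → ℝ≥0∞) :
    ∫⁻ n, g n ∂(muA a) = ∑' n : ℤ, ENNReal.ofReal (a n.natAbs) * g n := by
  simp [muA, lintegral_sum_measure, lintegral_smul_measure, lintegral_dirac]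

lemma muA_singleton (a : ℕ → ℝ) (n : ℤ) : muA a {n} = ENNReal.ofReal (a n.natAbs) := by
  have : muA a {n} = ∫⁻ m, Set.indicator {n} (fun _ => 1) m ∂(muA a) := by
    rw [lintegral_indicator (by measurability)]; simp
  rw [this, lintegral_muA, tsum_eq_single n]
  · simp
  · intro m hm; simp [Set.indicator, hm]

lemma ae_eq_muA {a : ℕ → ℝ} (ha : ∀ k, 0 < a k) {α : Type*} {f g : ℤ → α}
    (h : f =ᵐ[muA a] g) : f = g := by
  funext n
  by_contra hne
  have h0 : muA a {m | ¬ f m = g m} = 0 := ae_iff.1 h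
  have : muA a {n} ≤ muA a {m | ¬ f m = g m} := measure_mono (by simpa using hne)
  rw [muA_singleton, h0] at this
  simp only [nonpos_iff_eq_zero, ENNReal.ofReal_eq_zero] at this
  exact absurd this (not_le.2 (ha n.natAbs))

noncomputable def Nsum (a : ℕ → ℝ) (g : ℤ → ℝ) : ℝ≥0∞ :=
  ∑' n : ℤ, ENNReal.ofReal (a n.natAbs) * (‖g n‖₊ : ℝ≥0∞) ^ (2 : ℝ)

lemma eLpNorm_muA (a : ℕ → ℝ) (g : ℤ → ℝ) :
    eLpNorm g 2 (muA a) = (Nsum a g) ^ (1/2 : ℝ) := by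
  rw [eLpNorm_eq_lintegral_rpow_enorm_toReal two_ne_zero ENNReal.ofNat_ne_top, lintegral_muA]
  norm_num [Nsum, enorm_eq_nnnorm]

lemma memℒp_muA (a : ℕ → ℝ) (g : ℤ → ℝ) (h : Nsum a g ≠ ∞) : MemLp g 2 (muA a) :=
  ⟨(measurable_of_countable g).aestronglyMeasurable, by
    rw [eLpNorm_muA]
    exact ENNReal.rpow_lt_top_of_nonneg (by norm_num) h⟩

lemma Nsum_lt_top (a : ℕ → ℝ) (f : Lp ℝ 2 (muA a)) : Nsum a (f : ℤ → ℝ) ≠ ∞ := by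
  have h := Lp.eLpNorm_lt_top f
  rw [eLpNorm_muA] at h
  intro hh
  rw [hh] at h
  simp [ENNReal.top_rpow_of_pos] at h

noncomputable def Bmax (b : ℕ → ℝ) (k : ℕ) : ℝ :=
  (Finset.range (k+1)).sup' Finset.nonempty_range_add_one b

lemma le_Bmax (b : ℕ → ℝ) {j k : ℕ} (h : j ≤ k) : b j ≤ Bmax b k :=
  Finset.le_sup' b (Finset.mem_range.2 (Nat.lt_succ_of_le h))

lemma Bmax_pos {b : ℕ → ℝ} (hb : ∀ k, 0 < b k) (k : ℕ) : 0 < Bmax b k :=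
  lt_of_lt_of_le (hb 0) (le_Bmax b (Nat.zero_le k))

lemma natDist_le (n : ℤ) (k : ℕ) : Nat.dist (n - k).natAbs n.natAbs ≤ k := by
  simp [Nat.dist]; omega

lemma key_ineq {a : ℕ → ℝ} (ha : ∀ k, 0 < a k) {C : ℝ} (hC : 0 < C) {b : ℕ → ℝ}
    (hb : ∀ k, 0 < b k) (hab : ∀ k l : ℕ, a k / a l ≤ C * b (Nat.dist k l))
    (n : ℤ) (k : ℕ) : a (n - k).natAbs ≤ C * Bmax b k * a n.natAbs := by
  have h1 : a (n - k).natAbs / a n.natAbs ≤ C * b (Nat.dist (n - k).natAbs n.natAbs) :=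
    hab _ _
  have h2 : b (Nat.dist (n - k).natAbs n.natAbs) ≤ Bmax b k := le_Bmax b (natDist_le n k)
  have h3 : a (n - k).natAbs / a n.natAbs ≤ C * Bmax b k := h1.trans (by nlinarith)
  calc a (n - k).natAbs = (a (n - k).natAbs / a n.natAbs) * a n.natAbs := by
        field_simp [(ha n.natAbs).ne.symm]
    _ ≤ C * Bmax b k * a n.natAbs := by nlinarith [ha n.natAbs]

lemma Nsum_shift_le {a : ℕ → ℝ} {D : ℝ} (hD : 0 < D) {k : ℤ}
    (hkey : ∀ n : ℤ, a (n - k).natAbs ≤ D * a n.natAbs)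
    (g : ℤ → ℝ) :
    Nsum a (fun n => g (n + k)) ≤ ENNReal.ofReal D * Nsum a g := by
  unfold Nsum
  rw [← ENNReal.tsum_mul_left]
  have := (Equiv.subRight (k : ℤ)).tsum_eq
    (fun n : ℤ => ENNReal.ofReal (a n.natAbs) * (‖g (n + k)‖₊ : ℝ≥0∞) ^ (2 : ℝ))
  rw [← this]
  refine ENNReal.tsum_le_tsum fun m => ?_
  simp only [Equiv.subRight_apply, sub_add_cancel]
  rw [← mul_assoc, ← ENNReal.ofReal_mul hD.le]
  exact mul_le_mul_left (ENNReal.ofReal_le_ofReal (hkey m)) _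

noncomputable def deltaF (m : ℤ) : ℤ → ℝ := fun n => if n = m then 1 else 0

lemma Nsum_delta (a : ℕ → ℝ) (m : ℤ) : Nsum a (deltaF m) = ENNReal.ofReal (a m.natAbs) := by
  unfold Nsum
  rw [tsum_eq_single m]
  · simp [deltaF]
  · intro n hn
    simp [deltaF, hn, ENNReal.zero_rpow_of_pos]

lemma memℒp_shift {a : ℕ → ℝ} {D : ℝ} (hD : 0 < D) {k : ℤ}
    (hkey : ∀ n : ℤ, a (n - k).natAbs ≤ D * a n.natAbs)
    (f : Lp ℝ 2 (muA a)) : MemLp (fun n => (f : ℤ → ℝ) (n + k)) 2 (muA a) := by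
  refine memℒp_muA a _ ?_
  refine ne_top_of_le_ne_top ?_ (Nsum_shift_le hD hkey (f : ℤ → ℝ))
  exact (ENNReal.mul_lt_top ENNReal.ofReal_lt_top
    (lt_top_iff_ne_top.2 (Nsum_lt_top a f))).ne

lemma norm_shift_le {a : ℕ → ℝ} {D : ℝ} (hD : 0 < D) {k : ℤ}
    (hkey : ∀ n : ℤ, a (n - k).natAbs ≤ D * a n.natAbs)
    (f g : Lp ℝ 2 (muA a)) (hg : (g : ℤ → ℝ) = fun n => (f : ℤ → ℝ) (n + k)) :
    ‖g‖ ≤ D ^ (1/2 : ℝ) * ‖f‖ := by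
  rw [Lp.norm_def, Lp.norm_def, hg, eLpNorm_muA, eLpNorm_muA]
  have h1 : Nsum a (fun n => (f : ℤ → ℝ) (n + k)) ≤ ENNReal.ofReal D * Nsum a f :=
    Nsum_shift_le hD hkey _
  have h2 : (Nsum a (fun n => (f : ℤ → ℝ) (n + k))) ^ (1/2 : ℝ)
      ≤ (ENNReal.ofReal D) ^ (1/2 : ℝ) * (Nsum a (f : ℤ → ℝ)) ^ (1/2 : ℝ) := by
    rw [← ENNReal.mul_rpow_of_nonneg _ _ (by norm_num)]
    exact ENNReal.rpow_le_rpow h1 (by norm_num)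
  have hfin : (ENNReal.ofReal D) ^ (1/2 : ℝ) * (Nsum a (f : ℤ → ℝ)) ^ (1/2 : ℝ) ≠ ∞ := by
    refine (ENNReal.mul_lt_top ?_ ?_).ne
    · exact ENNReal.rpow_lt_top_of_nonneg (by norm_num) ENNReal.ofReal_ne_top
    · exact ENNReal.rpow_lt_top_of_nonneg (by norm_num) (Nsum_lt_top a f)
  calc ((Nsum a (fun n => (f : ℤ → ℝ) (n + k))) ^ (1/2 : ℝ)).toReal
      ≤ ((ENNReal.ofReal D) ^ (1/2 : ℝ) * (Nsum a (f : ℤ → ℝ)) ^ (1/2 : ℝ)).toReal :=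
        ENNReal.toReal_mono hfin h2
    _ = D ^ (1/2 : ℝ) * ((Nsum a (f : ℤ → ℝ)) ^ (1/2 : ℝ)).toReal := by
        rw [ENNReal.toReal_mul, ← ENNReal.toReal_rpow, ENNReal.toReal_ofReal hD.le]

noncomputable def shiftCLM (a : ℕ → ℝ) (ha : ∀ k, 0 < a k) {D : ℝ} (hD : 0 < D)
    (hkey : ∀ n : ℤ, a (n - 1).natAbs ≤ D * a n.natAbs) :
    Lp ℝ 2 (muA a) →L[ℝ] Lp ℝ 2 (muA a) :=
  LinearMap.mkContinuous
    { toFun := fun f => MemLp.toLp _ (memℒp_shift hD hkey f)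
      map_add' := fun f g => by
        apply Lp.ext
        have hadd : ((f + g : Lp ℝ 2 (muA a)) : ℤ → ℝ) = (f : ℤ → ℝ) + (g : ℤ → ℝ) :=
          ae_eq_muA ha (Lp.coeFn_add f g)
        have e1 : (MemLp.toLp _ (memℒp_shift hD hkey (f + g)) : ℤ → ℝ)
            = fun n => ((f + g : Lp ℝ 2 (muA a)) : ℤ → ℝ) (n + 1) :=
          ae_eq_muA ha (MemLp.coeFn_toLp _)
        have e2 : (MemLp.toLp _ (memℒp_shift hD hkey f) : ℤ → ℝ)
            = fun n => (f : ℤ → ℝ) (n + 1) := ae_eq_muA ha (MemLp.coeFn_toLp _)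
        have e3 : (MemLp.toLp _ (memℒp_shift hD hkey g) : ℤ → ℝ)
            = fun n => (g : ℤ → ℝ) (n + 1) := ae_eq_muA ha (MemLp.coeFn_toLp _)
        have e4 : ((MemLp.toLp _ (memℒp_shift hD hkey f)
              + MemLp.toLp _ (memℒp_shift hD hkey g) : Lp ℝ 2 (muA a)) : ℤ → ℝ)
            = (MemLp.toLp _ (memℒp_shift hD hkey f) : ℤ → ℝ)
              + (MemLp.toLp _ (memℒp_shift hD hkey g) : ℤ → ℝ) :=
          ae_eq_muA ha (Lp.coeFn_add _ _)
        have goal_eq : (MemLp.toLp _ (memℒp_shift hD hkey (f + g)) : ℤ → ℝ)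
            = ((MemLp.toLp _ (memℒp_shift hD hkey f)
              + MemLp.toLp _ (memℒp_shift hD hkey g) : Lp ℝ 2 (muA a)) : ℤ → ℝ) := by
          rw [e1, e4, e2, e3, hadd]; rfl
        exact Filter.Eventually.of_forall fun n => congrFun goal_eq n
      map_smul' := fun c f => by
        apply Lp.ext
        have hsmul : ((c • f : Lp ℝ 2 (muA a)) : ℤ → ℝ) = c • (f : ℤ → ℝ) :=
          ae_eq_muA ha (Lp.coeFn_smul c f)
        have e1 : (MemLp.toLp _ (memℒp_shift hD hkey (c • f)) : ℤ → ℝ)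
            = fun n => ((c • f : Lp ℝ 2 (muA a)) : ℤ → ℝ) (n + 1) :=
          ae_eq_muA ha (MemLp.coeFn_toLp _)
        have e2 : (MemLp.toLp _ (memℒp_shift hD hkey f) : ℤ → ℝ)
            = fun n => (f : ℤ → ℝ) (n + 1) := ae_eq_muA ha (MemLp.coeFn_toLp _)
        have e4 : ((c • MemLp.toLp _ (memℒp_shift hD hkey f) : Lp ℝ 2 (muA a)) : ℤ → ℝ)
            = c • (MemLp.toLp _ (memℒp_shift hD hkey f) : ℤ → ℝ) :=
          ae_eq_muA ha (Lp.coeFn_smul c _)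
        have goal_eq : (MemLp.toLp _ (memℒp_shift hD hkey (c • f)) : ℤ → ℝ)
            = ((c • MemLp.toLp _ (memℒp_shift hD hkey f) : Lp ℝ 2 (muA a)) : ℤ → ℝ) := by
          rw [e1, e4, e2, hsmul]; rfl
        exact Filter.Eventually.of_forall fun n => congrFun goal_eq n }
    (D ^ (1/2 : ℝ))
    (fun f => norm_shift_le hD hkey f (MemLp.toLp _ (memℒp_shift hD hkey f))
      (ae_eq_muA ha (MemLp.coeFn_toLp (memℒp_shift hD hkey f))))

lemma coeFn_shiftCLM (a : ℕ → ℝ) (ha : ∀ k, 0 < a k) {D : ℝ} (hD : 0 < D)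
    (hkey : ∀ n : ℤ, a (n - 1).natAbs ≤ D * a n.natAbs) (f : Lp ℝ 2 (muA a)) :
    ((shiftCLM a ha hD hkey f : Lp ℝ 2 (muA a)) : ℤ → ℝ) = fun n => (f : ℤ → ℝ) (n + 1) := by
  have : (shiftCLM a ha hD hkey) f
      = MemLp.toLp (fun n => (f : ℤ → ℝ) (n + 1)) (memℒp_shift hD hkey f) := by
    simp only [shiftCLM, LinearMap.mkContinuous_apply, LinearMap.coe_mk, AddHom.coe_mk]
  rw [this]
  exact ae_eq_muA ha (MemLp.coeFn_toLp _)

lemma coeFn_shiftCLM_pow (a : ℕ → ℝ) (ha : ∀ k, 0 < a k) {D : ℝ} (hD : 0 < D)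
    (hkey : ∀ n : ℤ, a (n - 1).natAbs ≤ D * a n.natAbs) (k : ℕ) (f : Lp ℝ 2 (muA a)) :
    (((shiftCLM a ha hD hkey) ^ k) f : ℤ → ℝ) = fun n => (f : ℤ → ℝ) (n + (k : ℤ)) := by
  induction k generalizing f with
  | zero => simp
  | succ k ih =>
    rw [pow_succ', ContinuousLinearMap.mul_apply, coeFn_shiftCLM a ha hD hkey]
    funext n
    rw [ih]
    congr 1
    push_cast
    ring

lemma shift_norm_pow_le {a : ℕ → ℝ} (ha : ∀ k, 0 < a k) {D E : ℝ} (hD : 0 < D) (hE : 0 < E)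
    (hkey : ∀ n : ℤ, a (n - 1).natAbs ≤ D * a n.natAbs) (k : ℕ)
    (hkeyk : ∀ n : ℤ, a (n - (k : ℤ)).natAbs ≤ E * a n.natAbs) :
    ‖(shiftCLM a ha hD hkey) ^ k‖ ≤ E ^ (1/2 : ℝ) := by
  refine ContinuousLinearMap.opNorm_le_bound _ (Real.rpow_nonneg hE.le _) fun f => ?_
  exact norm_shift_le hE hkeyk f _ (coeFn_shiftCLM_pow a ha hD hkey k f)

lemma norm_toLp_delta {a : ℕ → ℝ} (ha : ∀ k, 0 < a k) (m : ℤ)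
    (h : MemLp (deltaF m) 2 (muA a)) :
    ‖MemLp.toLp (deltaF m) h‖ = (a m.natAbs) ^ (1/2 : ℝ) := by
  rw [Lp.norm_toLp, eLpNorm_muA, Nsum_delta, ← ENNReal.toReal_rpow,
    ENNReal.toReal_ofReal (ha m.natAbs).le]

lemma memℒp_delta (a : ℕ → ℝ) (m : ℤ) : MemLp (deltaF m) 2 (muA a) :=
  memℒp_muA a _ (by rw [Nsum_delta]; exact ENNReal.ofReal_ne_top)

lemma one_lt_norm_pow {a : ℕ → ℝ} (ha : ∀ k, 0 < a k) (hanti : StrictAnti a)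
    {D : ℝ} (hD : 0 < D)
    (hkey : ∀ n : ℤ, a (n - 1).natAbs ≤ D * a n.natAbs) (k : ℕ) (hk : 1 ≤ k) :
    1 < ‖(shiftCLM a ha hD hkey) ^ k‖ := by
  set T := shiftCLM a ha hD hkey
  set fδ := MemLp.toLp (deltaF (k : ℤ)) (memℒp_delta a (k : ℤ)) with hfδ
  have hnf : ‖fδ‖ = (a k) ^ (1/2 : ℝ) := by
    rw [hfδ, norm_toLp_delta ha]; simp
  have hcoe : ((T ^ k) fδ : ℤ → ℝ) = deltaF 0 := by
    rw [coeFn_shiftCLM_pow a ha hD hkey k fδ]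
    have h1 : (fδ : ℤ → ℝ) = deltaF (k : ℤ) := ae_eq_muA ha (MemLp.coeFn_toLp _)
    funext n
    rw [h1]
    simp only [deltaF]
    congr 1
    simp only [eq_iff_iff]
    omega
  have hnTf : ‖(T ^ k) fδ‖ = (a 0) ^ (1/2 : ℝ) := by
    rw [Lp.norm_def, hcoe, eLpNorm_muA, Nsum_delta]
    simp [← ENNReal.toReal_rpow, ENNReal.toReal_ofReal (ha 0).le]
  have hle := (T ^ k).le_opNorm fδ
  rw [hnTf, hnf] at hle
  have hlt : (a k) ^ (1/2 : ℝ) < (a 0) ^ (1/2 : ℝ) :=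
    Real.rpow_lt_rpow (ha k).le (hanti (Nat.pos_of_ne_zero (by omega))) (by norm_num)
  have hpos : (0 : ℝ) < (a k) ^ (1/2 : ℝ) := Real.rpow_pos_of_pos (ha k) _
  have : (a k) ^ (1/2 : ℝ) < ‖T ^ k‖ * (a k) ^ (1/2 : ℝ) := lt_of_lt_of_le hlt hle
  exact (lt_mul_iff_one_lt_left hpos).1 this

lemma Lk_tendsto {c : ℕ → ℝ} (hc : ∀ k, 0 ≤ c k)
    (h : Tendsto (fun k : ℕ => c k / (k : ℝ)) atTop (𝓝 0)) :
    Tendsto (fun k : ℕ => Bmax c k * (k : ℝ)⁻¹) atTop (𝓝 0) := by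
  rw [Metric.tendsto_atTop] at h ⊢
  intro ε hε
  obtain ⟨J, hJ⟩ := h (ε/2) (by linarith)
  set M := Bmax c J with hM
  obtain ⟨N₀, hN₀⟩ := exists_nat_gt (2 * M / ε)
  refine ⟨max (J + 1) N₀, fun k hk => ?_⟩
  have hk1 : J + 1 ≤ k := le_trans (le_max_left _ _) hk
  have hk2 : N₀ ≤ k := le_trans (le_max_right _ _) hk
  have hkpos : 0 < k := by omega
  have hkR : (0:ℝ) < k := by exact_mod_cast hkpos
  have hbound : Bmax c k ≤ ε/2 * k := by
    refine Finset.sup'_le _ _ fun j hj => ?_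
    rcases le_or_gt j J with hjJ | hjJ
    · have h1 : c j ≤ M := le_Bmax c hjJ
      have hkN : (2 * M / ε) < (k:ℝ) := lt_of_lt_of_le hN₀ (by exact_mod_cast hk2)
      have h2 : M < ε/2 * k := by
        have : ε/2 * (2 * M / ε) < ε/2 * k := by
          apply mul_lt_mul_of_pos_left hkN (by linarith)
        calc M = ε/2 * (2 * M / ε) := by field_simp
          _ < ε/2 * k := this
      linarith
    · have hjpos : 0 < j := by omega
      have hjR : (0:ℝ) < j := by exact_mod_cast hjpos
      have hd := hJ j (by omega)
      rw [Real.dist_eq, sub_zero] at hd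
      have habs : c j / j < ε/2 := lt_of_abs_lt hd
      have hcj : c j < ε/2 * j := by
        rw [div_lt_iff₀ hjR] at habs; linarith
      have hjk : (j:ℝ) ≤ k := by
        exact_mod_cast Nat.lt_succ_iff.1 (Finset.mem_range.1 hj)
      nlinarith
  have hnonneg : 0 ≤ Bmax c k := le_trans (hc 0) (le_Bmax c (Nat.zero_le k))
  rw [Real.dist_eq, sub_zero]
  have hle2 : Bmax c k * (k:ℝ)⁻¹ ≤ ε/2 := by
    rw [← div_eq_mul_inv, div_le_iff₀ hkR]
    linarith
  rw [abs_of_nonneg (by positivity)]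
  linarith

lemma abs_log_Bmax_le (b : ℕ → ℝ) (k : ℕ) :
    |Real.log (Bmax b k)| ≤ Bmax (fun j => |Real.log (b j)|) k := by
  obtain ⟨j, hj, hval⟩ := Finset.exists_mem_eq_sup' (Finset.nonempty_range_add_one (n := k)) b
  rw [show Bmax b k = b j from hval]
  exact le_Bmax (fun j => |Real.log (b j)|) (Nat.lt_succ_iff.1 (Finset.mem_range.1 hj))

lemma tendsto_g {C : ℝ} (hC : 0 < C) {b : ℕ → ℝ} (hb : ∀ k, 0 < b k)
    (hbsub : Tendsto (fun k : ℕ => |Real.log (b k)| / (k : ℝ)) atTop (𝓝 0)) :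
    Tendsto (fun k : ℕ => ((C * Bmax b k) ^ (1/2 : ℝ)) ^ ((k : ℝ)⁻¹)) atTop (𝓝 1) := by
  have hpos : ∀ k, 0 < C * Bmax b k := fun k => mul_pos hC (Bmax_pos hb k)
  have hrw : ∀ k : ℕ, ((C * Bmax b k) ^ (1/2 : ℝ)) ^ ((k:ℝ)⁻¹)
      = Real.exp ((Real.log C + Real.log (Bmax b k)) * ((1/2) * (k:ℝ)⁻¹)) := by
    intro k
    rw [← Real.rpow_mul (hpos k).le, Real.rpow_def_of_pos (hpos k),
      Real.log_mul hC.ne' (Bmax_pos hb k).ne']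
  simp only [hrw]
  have t2 : Tendsto (fun k : ℕ => Real.log (Bmax b k) * (k:ℝ)⁻¹) atTop (𝓝 0) := by
    have hb2 : Tendsto (fun k : ℕ => Bmax (fun j => |Real.log (b j)|) k * (k:ℝ)⁻¹)
        atTop (𝓝 0) := Lk_tendsto (fun k => abs_nonneg _) hbsub
    refine squeeze_zero_norm (fun k => ?_) hb2
    rw [norm_mul, Real.norm_eq_abs, Real.norm_eq_abs, abs_inv, Nat.abs_cast]
    exact mul_le_mul_of_nonneg_right (abs_log_Bmax_le b k) (by positivity)
  have t1 : Tendsto (fun k : ℕ => Real.log C * ((1/2) * (k:ℝ)⁻¹)) atTop (𝓝 0) := by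
    have := (tendsto_inv_atTop_nhds_zero_nat.const_mul (1/2 : ℝ)).const_mul (Real.log C)
    simpa using this
  have hsum : Tendsto (fun k : ℕ => Real.log C * ((1/2) * (k:ℝ)⁻¹)
      + (Real.log (Bmax b k) * (k:ℝ)⁻¹) * (1/2)) atTop (𝓝 0) := by
    simpa using t1.add (t2.mul_const (1/2 : ℝ))
  have hexp := (Real.continuous_exp.tendsto 0).comp hsum
  simp only [Function.comp_def, Real.exp_zero] at hexp
  convert hexp using 2 with k
  ring

/-- if `𝐚 = (aₖ)` sub-exponentially decreases to `0`, then the left-shift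
is a bounded linear operator `T` on `ℍ_𝐚`, with `‖Tᵏ‖ > 1` for every `k ≥ 1` and
spectral radius `lim_k ‖Tᵏ‖^{1/k} = 1`. -/
theorem stmt7 (a : ℕ → ℝ) (ha : ∀ k, 0 < a k) (hanti : StrictAnti a)
    (ha0 : Tendsto a atTop (𝓝 0))
    (C : ℝ) (hC : 0 < C) (b : ℕ → ℝ) (hb : ∀ k, 0 < b k)
    (hbsub : Tendsto (fun k : ℕ => |Real.log (b k)| / (k : ℝ)) atTop (𝓝 0))
    (hab : ∀ k l : ℕ, a k / a l ≤ C * b (Nat.dist k l)) :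
    ∃ T : Lp ℝ 2 (muA a) →L[ℝ] Lp ℝ 2 (muA a),
      (∀ f : Lp ℝ 2 (muA a), (T f : ℤ → ℝ) =ᵐ[muA a] fun n => f (n + 1)) ∧
      (∀ k : ℕ, 1 ≤ k → 1 < ‖T ^ k‖) ∧
      Tendsto (fun k : ℕ => ‖T ^ k‖ ^ ((k : ℝ)⁻¹)) atTop (𝓝 1) := by
  have hD : 0 < C * Bmax b 1 := mul_pos hC (Bmax_pos hb 1)
  have hkey1 : ∀ n : ℤ, a (n - 1).natAbs ≤ (C * Bmax b 1) * a n.natAbs := by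
    intro n
    have := key_ineq ha hC hb hab n 1
    simpa using this
  set T := shiftCLM a ha hD hkey1 with hT
  refine ⟨T, ?_, ?_, ?_⟩
  · intro f
    rw [hT, coeFn_shiftCLM a ha hD hkey1 f]
  · exact fun k hk => one_lt_norm_pow ha hanti hD hkey1 k hk
  · have hupper : ∀ k : ℕ, ‖T ^ k‖ ≤ (C * Bmax b k) ^ (1/2 : ℝ) := fun k =>
      shift_norm_pow_le ha hD (mul_pos hC (Bmax_pos hb k)) hkey1 k
        (fun n => key_ineq ha hC hb hab n k)
    refine tendsto_of_tendsto_of_tendsto_of_le_of_le' tendsto_const_nhds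
      (tendsto_g hC hb hbsub) ?_ ?_
    · filter_upwards [eventually_ge_atTop 1] with k hk
      have h1 : (1:ℝ) ≤ ‖T ^ k‖ := (one_lt_norm_pow ha hanti hD hkey1 k hk).le
      calc (1:ℝ) = 1 ^ ((k:ℝ)⁻¹) := (Real.one_rpow _).symm
        _ ≤ ‖T ^ k‖ ^ ((k:ℝ)⁻¹) := Real.rpow_le_rpow zero_le_one h1 (by positivity)
    · filter_upwards with k
      exact Real.rpow_le_rpow (norm_nonneg _) (hupper k) (by positivity)
end

section
/- Let $(X,d)$ be a compact metric space, $T$ a homeomorphism, $\delta>0$, and let $(\beta_i)_{i\ge 1}$ be an increasing sequence of finite Borel partitions ($\beta_1\prec\beta_2\prec\cdots$) with $\operatorname{diam}(\beta_1)\le\delta$, $\operatorname{diam}(T\beta_1)\le\delta$, and $\operatorname{diam}(\beta_i)\to 0$. Let $(k_i)_{i\ge 1}$ be nonnegative integers with $k_1=0$, set $\alpha_q := \bigvee_{p=1}^q T^{k_p}\beta_p$, $\mathcal{P} := \bigvee_{p=1}^{\infty}\alpha_p$, and $\xi := \mathcal{P}^- = \bigvee_{n\ge 1} T^n\mathcal{P}$.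 Then for every $x\in X$, the closure $\overline{\xi(x)}$ of the atom of $\xi$ containing $x$ is contained in the $\delta$-unstable set $W^u_\delta(x,T)$. -/
open MeasureTheory Filter Set Topology

/-- The `δ`-unstable set of `x` for the homeomorphism with inverse `Tinv`:
`W^u_δ(x,T) = {y : d(T⁻ⁿx, T⁻ⁿy) ≤ δ for all n ≥ 0 and d(T⁻ⁿx,T⁻ⁿy) → 0}`. -/
def unstableSet {X : Type*} [PseudoMetricSpace X] (Tinv : X → X) (δ : ℝ) (x : X) : Set X :=
  {y | (∀ n : ℕ, dist (Tinv^[n] x) (Tinv^[n] y) ≤ δ) ∧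
    Tendsto (fun n : ℕ => dist (Tinv^[n] x) (Tinv^[n] y)) atTop (𝓝 0)}

/-- the measurable partition `ξ = 𝒫⁻` built from the increasing sequence
of finite Borel partitions `βᵢ` (0-indexed here: `β 0` plays the role of `β₁`) and the
shifts `kᵢ` (with `k 0 = 0`) is subordinate to local unstable sets: the closure of each
atom `ξ(x)` is contained in `W^u_δ(x,T)`.  Finite Borel partitions are encoded as Borel
measurable maps `βᵢ : X → ℕ` with finite range, and the atom of `ξ` containing `x` is
`{y : ∀ n ≥ 1, ∀ p, β p (T^{-(k p + n)} y) = β p (T^{-(k p + n)} x)}`. -/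
theorem stmt16 {X : Type*} [MetricSpace X] [CompactSpace X] [MeasurableSpace X] [BorelSpace X]
    (T : X ≃ₜ X) (δ : ℝ) (hδ : 0 < δ)
    (β : ℕ → X → ℕ) (hβmeas : ∀ i, Measurable (β i)) (hβfin : ∀ i, (Set.range (β i)).Finite)
    (hmono : ∀ i x y, β (i + 1) x = β (i + 1) y → β i x = β i y)
    (hdiam0 : ∀ j, Metric.diam ((β 0) ⁻¹' {j}) ≤ δ)
    (hdiamT : ∀ j, Metric.diam ((⇑T) '' ((β 0) ⁻¹' {j})) ≤ δ)
    (hdiam : ∀ ε : ℝ, 0 < ε → ∃ I : ℕ, ∀ i, I ≤ i → ∀ j, Metric.diam ((β i) ⁻¹' {j}) ≤ ε)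
    (k : ℕ → ℕ) (hk0 : k 0 = 0) (x : X) :
    closure {y | ∀ n, 1 ≤ n → ∀ p,
        β p ((⇑T.symm)^[k p + n] y) = β p ((⇑T.symm)^[k p + n] x)} ⊆
      unstableSet (⇑T.symm) δ x := by

  intro y hy
  have hbd : ∀ s : Set X, Bornology.IsBounded s :=
    fun s => (isCompact_univ.isBounded).subset (subset_univ s)
  have key : ∀ p m, k p + 1 ≤ m →
      (⇑T.symm)^[m] y ∈ closure ((β p) ⁻¹' {β p ((⇑T.symm)^[m] x)}) := by
    intro p m hm
    have hcont : Continuous ((⇑T.symm)^[m]) := T.continuous_symm.iterate m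
    have h1 : (⇑T.symm)^[m] y ∈
        closure ((⇑T.symm)^[m] '' {y | ∀ n, 1 ≤ n → ∀ p,
          β p ((⇑T.symm)^[k p + n] y) = β p ((⇑T.symm)^[k p + n] x)}) :=
      image_closure_subset_closure_image hcont ⟨y, hy, rfl⟩
    refine closure_mono ?_ h1
    rintro _ ⟨z, hz, rfl⟩
    have hn : 1 ≤ m - k p := by omega
    have h2 := hz (m - k p) hn p
    have hmk : k p + (m - k p) = m := by omega
    rw [hmk] at h2
    simpa using h2
  have dist_le : ∀ p m, k p + 1 ≤ m →
      dist ((⇑T.symm)^[m] x) ((⇑T.symm)^[m] y) ≤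
        Metric.diam ((β p) ⁻¹' {β p ((⇑T.symm)^[m] x)}) := by
    intro p m hm
    have hx' : (⇑T.symm)^[m] x ∈ closure ((β p) ⁻¹' {β p ((⇑T.symm)^[m] x)}) :=
      subset_closure rfl
    calc dist ((⇑T.symm)^[m] x) ((⇑T.symm)^[m] y)
        ≤ Metric.diam (closure ((β p) ⁻¹' {β p ((⇑T.symm)^[m] x)})) :=
          Metric.dist_le_diam_of_mem ((hbd _).closure) hx' (key p m hm)
      _ = _ := Metric.diam_closure _
  constructor
  · intro n
    match n with
    | 0 =>
      have h1 : y ∈ closure ((⇑T) '' ((β 0) ⁻¹' {β 0 (T.symm x)})) := by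
        refine closure_mono ?_ hy
        intro z hz
        have h2 := hz 1 le_rfl 0
        rw [hk0] at h2
        simp only [zero_add, Function.iterate_one] at h2
        exact ⟨T.symm z, h2, T.apply_symm_apply z⟩
      have hx1 : x ∈ (⇑T) '' ((β 0) ⁻¹' {β 0 (T.symm x)}) :=
        ⟨T.symm x, rfl, T.apply_symm_apply x⟩
      simp only [Function.iterate_zero, id]
      calc dist x y ≤ Metric.diam (closure ((⇑T) '' ((β 0) ⁻¹' {β 0 (T.symm x)}))) :=
            Metric.dist_le_diam_of_mem ((hbd _).closure) (subset_closure hx1) h1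
        _ = Metric.diam ((⇑T) '' ((β 0) ⁻¹' {β 0 (T.symm x)})) := Metric.diam_closure _
        _ ≤ δ := hdiamT _
    | n + 1 =>
      exact (dist_le 0 (n+1) (by omega)).trans (hdiam0 _)
  · rw [Metric.tendsto_atTop]
    intro ε hε
    obtain ⟨I, hI⟩ := hdiam (ε/2) (by positivity)
    refine ⟨k I + 1, fun m hm => ?_⟩
    have h3 := (dist_le I m hm).trans (hI I le_rfl _)
    have hd : (0:ℝ) ≤ dist ((⇑T.symm)^[m] x) ((⇑T.symm)^[m] y) := dist_nonneg
    rw [Real.dist_eq, sub_zero, abs_of_nonneg hd]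
    linarith
end
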